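/- Let C ∈ (0,1) and let (Z_t)_{t≥1} and (Z*_t)_{t≥1} be sequences in ℝ^d (or any real normed space) such that ‖Z_{t+1} − Z*_t‖ ≤ C‖Z_t − Z*_t‖ for all t ≥ 1 (i.e., the algorithm producing Z_{t+1} from Z_t is C-contractive toward the solution Z*_t). Then for every T ≥ 1, Σ_{t=1}^T ‖Z_t − Z*_t‖² ≤ (1/(1−C)²) Σ_{t=2}^T ‖Z*_t − Z*_{t−1}‖² + (1/(1−C)) ‖Z_1 − Z*_1‖². -/

import Mathlib

/-- **Tracking bound for contractive algorithms** (Theorem 1 of the paper).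
If each update is `C`-contractive toward the current solution `Zstar t`, then the
tracking error over the first `T` rounds is bounded by the quadratic path length of the
solutions times `1/(1-C)^2`, plus the initial error times `1/(1-C)`. -/
theorem stmt0 {E : Type*} [NormedAddCommGroup E] [NormedSpace ℝ E]
    (C : ℝ) (hC0 : 0 < C) (hC1 : C < 1)
    (Z Zstar : ℕ → E)
    (hcontract : ∀ t, 1 ≤ t → ‖Z (t + 1) - Zstar t‖ ≤ C * ‖Z t - Zstar t‖) :
    ∀ T, 1 ≤ T →
      ∑ t ∈ Finset.Icc 1 T, ‖Z t - Zstar t‖ ^ 2 ≤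
        (1 / (1 - C) ^ 2) * ∑ t ∈ Finset.Icc 2 T, ‖Zstar t - Zstar (t - 1)‖ ^ 2 +
          (1 / (1 - C)) * ‖Z 1 - Zstar 1‖ ^ 2 := by
  intro T hT
  have h1C : (0:ℝ) < 1 - C := by linarith
  set a : ℕ → ℝ := fun t => ‖Z t - Zstar t‖ with ha
  set b : ℕ → ℝ := fun t => ‖Zstar t - Zstar (t - 1)‖ with hb
  have hann : ∀ t, 0 ≤ a t := fun t => norm_nonneg _
  have hbnn : ∀ t, 0 ≤ b t := fun t => norm_nonneg _
  -- pointwise bound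
  have hpt : ∀ t ∈ Finset.Icc 2 T, a t ^ 2 ≤ C * a (t-1) ^ 2 + (1/(1-C)) * b t ^ 2 := by
    intro t ht
    simp only [Finset.mem_Icc] at ht
    obtain ⟨s, rfl⟩ : ∃ s, t = s + 1 := ⟨t - 1, by omega⟩
    have hs : 1 ≤ s := by omega
    have htri : a (s+1) ≤ C * a s + b (s+1) := by
      have h1 := hcontract s hs
      have h2 : ‖Z (s+1) - Zstar (s+1)‖ ≤ ‖Z (s+1) - Zstar s‖ + ‖Zstar s - Zstar (s+1)‖ :=
        norm_sub_le_norm_sub_add_norm_sub _ _ _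
      have h3 : ‖Zstar s - Zstar (s+1)‖ = ‖Zstar (s+1) - Zstar s‖ := norm_sub_rev _ _
      simp only [ha, hb, Nat.add_sub_cancel]
      calc ‖Z (s+1) - Zstar (s+1)‖ ≤ ‖Z (s+1) - Zstar s‖ + ‖Zstar (s+1) - Zstar s‖ := by
              rw [← h3]; exact h2
        _ ≤ C * ‖Z s - Zstar s‖ + ‖Zstar (s+1) - Zstar s‖ := by linarith
    simp only [Nat.add_sub_cancel]
    rw [← mul_le_mul_iff_right₀ h1C]
    have hrhs : (1 - C) * (C * a s ^ 2 + 1/(1-C) * b (s+1) ^ 2)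
        = (1-C)*C*(a s)^2 + b (s+1) ^ 2 := by
      field_simp
    rw [hrhs]
    nlinarith [mul_nonneg hC0.le (sq_nonneg ((1-C) * a s - b (s+1))), hann (s+1), hann s,
      hbnn (s+1), mul_self_le_mul_self (hann (s+1)) htri,
      mul_nonneg (mul_nonneg hC0.le (hann s)) (hbnn (s+1))]
  -- split off the first term
  have hins : Finset.Icc 1 T = insert 1 (Finset.Icc 2 T) := by
    ext x; simp only [Finset.mem_Icc, Finset.mem_insert]; omega
  have hnotmem : (1:ℕ) ∉ Finset.Icc 2 T := by simp
  have hsplit : ∑ t ∈ Finset.Icc 1 T, a t ^ 2 = a 1 ^ 2 + ∑ t ∈ Finset.Icc 2 T, a t ^ 2 := by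
    rw [hins, Finset.sum_insert hnotmem]
  -- shifted sum bound
  have hinj : Set.InjOn (fun t => t - 1) (Finset.Icc 2 T) := by
    intro x hx y hy hxy
    simp only [Finset.coe_Icc, Set.mem_Icc] at hx hy
    have h' : x - 1 = y - 1 := hxy
    omega
  have himage : (Finset.Icc 2 T).image (fun t => t - 1) = Finset.Icc 1 (T-1) := by
    ext x
    simp only [Finset.mem_image, Finset.mem_Icc]
    constructor
    · rintro ⟨y, hy, rfl⟩
      show 1 ≤ y - 1 ∧ y - 1 ≤ T - 1
      omega
    · intro hx; exact ⟨x + 1, by omega, by omega⟩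
  have hshift : ∑ t ∈ Finset.Icc 2 T, a (t-1) ^ 2 ≤ ∑ t ∈ Finset.Icc 1 T, a t ^ 2 := by
    have h1 : ∑ s ∈ (Finset.Icc 2 T).image (fun t => t - 1), a s ^ 2
        = ∑ t ∈ Finset.Icc 2 T, a (t-1) ^ 2 :=
      Finset.sum_image (f := fun s => a s ^ 2) (g := fun t => t - 1) (fun x hx y hy h => hinj hx hy h)
    rw [← h1, himage]
    apply Finset.sum_le_sum_of_subset_of_nonneg
    · apply Finset.Icc_subset_Icc_right; omega
    · intro i _ _; positivity
  have hmid : ∑ t ∈ Finset.Icc 2 T, a t ^ 2 ≤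
      C * ∑ t ∈ Finset.Icc 1 T, a t ^ 2 + (1/(1-C)) * ∑ t ∈ Finset.Icc 2 T, b t ^ 2 := by
    calc ∑ t ∈ Finset.Icc 2 T, a t ^ 2
        ≤ ∑ t ∈ Finset.Icc 2 T, (C * a (t-1) ^ 2 + (1/(1-C)) * b t ^ 2) :=
          Finset.sum_le_sum hpt
      _ = C * ∑ t ∈ Finset.Icc 2 T, a (t-1) ^ 2 + (1/(1-C)) * ∑ t ∈ Finset.Icc 2 T, b t ^ 2 := by
          rw [Finset.sum_add_distrib, Finset.mul_sum, Finset.mul_sum]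
      _ ≤ C * ∑ t ∈ Finset.Icc 1 T, a t ^ 2 + (1/(1-C)) * ∑ t ∈ Finset.Icc 2 T, b t ^ 2 := by
          have := mul_le_mul_of_nonneg_left hshift hC0.le
          linarith
  set S := ∑ t ∈ Finset.Icc 1 T, a t ^ 2 with hS
  set B := ∑ t ∈ Finset.Icc 2 T, b t ^ 2 with hB
  have key : (1 - C) * S ≤ a 1 ^ 2 + (1/(1-C)) * B := by nlinarith [hsplit, hmid]
  have hinv : (1 - C) * (1/(1-C)) = 1 := by field_simp
  have key2 : (1 - C)^2 * S ≤ (1 - C) * a 1 ^ 2 + B := by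
    have h := mul_le_mul_of_nonneg_left key h1C.le
    have hr : (1 - C) * (a 1 ^ 2 + 1/(1-C) * B) = (1 - C) * a 1 ^ 2 + B := by
      field_simp
    rw [hr] at h
    nlinarith [h]
  have hsq : (0:ℝ) < (1 - C)^2 := by positivity
  rw [← mul_le_mul_iff_right₀ hsq]
  have hrhs2 : (1 - C)^2 * ((1 / (1 - C) ^ 2) * B + (1 / (1 - C)) * a 1 ^ 2)
      = B + (1 - C) * a 1 ^ 2 := by field_simp
  rw [hrhs2]
  linarith [key2]
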